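/- Every metrisable topological manifold is squat: if M is a metrisable topological space in which every point has an open neighbourhood homeomorphic to ℝⁿ (for some fixed n), then every continuous map f : 𝕃₊ → M is eventually constant. -/

import Mathlib

noncomputable section

open Set Topology Filter

universe u

/-! ### The long ray and the long line -/

/-- The first uncountable ordinal `ω₁`, viewed as the linearly ordered set of all
countable ordinals. -/
def Omega1 : Type 1 := {o : Ordinal.{0} // o < (Cardinal.aleph 1).ord}

instance : LinearOrder Omega1 :=
  inferInstanceAs (LinearOrder {o : Ordinal.{0} // o < (Cardinal.aleph 1).ord})

/-- `ω₁` carries the order topology. -/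
instance : TopologicalSpace Omega1 := Preorder.topology Omega1

instance : OrderTopology Omega1 := ⟨rfl⟩

/-- The underlying countable ordinal of an element of `ω₁`. -/
def Omega1.toOrdinal : Omega1 → Ordinal.{0} := Subtype.val

/-- The closed long ray `𝕃≥0`: the set `ω₁ × [0,1)` with the lexicographic order and the
order topology. -/
def ClosedLongRay : Type 1 := Omega1 ×ₗ (Set.Ico (0:ℝ) 1)

instance : LinearOrder ClosedLongRay :=
  inferInstanceAs (LinearOrder (Omega1 ×ₗ (Set.Ico (0:ℝ) 1)))

instance : TopologicalSpace ClosedLongRay := Preorder.topology ClosedLongRay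

instance : OrderTopology ClosedLongRay := ⟨rfl⟩

/-- The long ray `𝕃₊`: the closed long ray with its least element removed, with the
subspace topology (an element is non-minimal iff something is below it). -/
def LongRay : Type 1 := {x : ClosedLongRay // ∃ y, y < x}

instance : LinearOrder LongRay :=
  inferInstanceAs (LinearOrder {x : ClosedLongRay // ∃ y, y < x})

instance : TopologicalSpace LongRay :=
  inferInstanceAs (TopologicalSpace {x : ClosedLongRay // ∃ y, y < x})

/-- The inclusion of the long ray into the closed long ray. -/
def LongRay.toCLR : LongRay → ClosedLongRay := Subtype.val

/-- The long line `𝕃`: an order-reversed copy of `𝕃₊` placed below the closed long ray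
`𝕃≥0`, with the order topology. -/
def LongLine : Type 1 := (OrderDual LongRay) ⊕ₗ ClosedLongRay

instance : LinearOrder LongLine :=
  inferInstanceAs (LinearOrder ((OrderDual LongRay) ⊕ₗ ClosedLongRay))

instance : TopologicalSpace LongLine := Preorder.topology LongLine

instance : OrderTopology LongLine := ⟨rfl⟩

/-- The identification of `𝕃₊` with the set of positive elements of `𝕃`. -/
def LongRay.inL (a : LongRay) : LongLine := toLex (Sum.inr a.toCLR)

/-- The natural order-reversing involution `x ↦ -x` of the long line, exchanging the two
copies of `𝕃₊` and fixing the least element `0` of `𝕃≥0`. -/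
noncomputable def LongLine.neg (x : LongLine) : LongLine :=
  match ofLex x with
  | Sum.inl a => toLex (Sum.inr (OrderDual.ofDual a).toCLR)
  | Sum.inr b =>
      @dite _ (∃ y, y < b) (Classical.dec _)
        (fun h => toLex (Sum.inl (OrderDual.toDual (⟨b, h⟩ : LongRay))))
        (fun _ => x)

/-- A subset of the long ray is a *club* if it is closed (in the topology of `𝕃₊`) and
unbounded (i.e. cofinal). -/
def ClubInLongRay (C : Set LongRay) : Prop :=
  IsClosed C ∧ ∀ β : LongRay, ∃ α ∈ C, β ≤ α

/-- A topological space `X` is *squat* if every continuous map `𝕃₊ → X` is eventually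
constant. -/
def Squat (X : Type*) [TopologicalSpace X] : Prop :=
  ∀ f : LongRay → X, Continuous f → ∃ (β : LongRay) (x : X), ∀ α, β ≤ α → f α = x

/-! ### Manifolds and foliations -/

/-- A (topological) `n`-manifold: a nonempty Hausdorff space in which every point has an
open neighbourhood homeomorphic to `ℝⁿ`. -/
def IsTopManifold (M : Type u) [TopologicalSpace M] (n : ℕ) : Prop :=
  Nonempty M ∧ T2Space M ∧
    ∀ x : M, ∃ U : Set M, x ∈ U ∧ IsOpen U ∧ Nonempty (U ≃ₜ (Fin n → ℝ))

/-- A foliation of dimension `p` and codimension `q` on a space `M`: a family of charts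
`φᵢ : Uᵢ ≃ₜ ℝᵖ × ℝ^q` on open sets covering `M` such that all coordinate transformations
have the form `(x, y) ↦ (g (x, y), h y)`, i.e. the last `q` coordinates of the image
depend only on the last `q` coordinates of the argument. -/
structure Foliation (M : Type u) [TopologicalSpace M] (p q : ℕ) where
  /-- index type of the atlas -/
  ι : Type u
  /-- chart domains -/
  U : ι → Set M
  /-- the charts -/
  chart : (i : ι) → ((U i) ≃ₜ ((Fin p → ℝ) × (Fin q → ℝ)))
  isOpen : ∀ i, IsOpen (U i)
  covers : ∀ x : M, ∃ i, x ∈ U i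
  compat : ∀ i j (x y : M) (hxi : x ∈ U i) (hxj : x ∈ U j) (hyi : y ∈ U i) (hyj : y ∈ U j),
    (chart i ⟨x, hxi⟩).2 = (chart i ⟨y, hyi⟩).2 → (chart j ⟨x, hxj⟩).2 = (chart j ⟨y, hyj⟩).2

namespace Foliation

variable {M : Type u} [TopologicalSpace M] {p q : ℕ}

/-- The set `φᵢ⁻¹ (ℝᵖ × {y})` in the chart domain `Uᵢ`. -/
def plaqueFibre (F : Foliation M p q) (i : F.ι) (y : Fin q → ℝ) : Set M :=
  {w : M | ∃ hw : w ∈ F.U i, (F.chart i ⟨w, hw⟩).2 = y}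

/-- A *plaque* of the foliation: a connected component of a set of the form
`φᵢ⁻¹ (ℝᵖ × {y})`. -/
def IsPlaque (F : Foliation M p q) (P : Set M) : Prop :=
  ∃ (i : F.ι) (y : Fin q → ℝ) (z : M), z ∈ F.plaqueFibre i y ∧
    P = connectedComponentIn (F.plaqueFibre i y) z

/-- Two points lie in a common plaque. -/
def samePlaque (F : Foliation M p q) (x y : M) : Prop :=
  ∃ P, F.IsPlaque P ∧ x ∈ P ∧ y ∈ P

/-- The leaf relation: the smallest equivalence relation relating any two points that lie
in a common plaque. -/
def leafRel (F : Foliation M p q) : M → M → Prop := Relation.EqvGen F.samePlaque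

/-- The *leaves* of the foliation: equivalence classes of the leaf relation. -/
def IsLeaf (F : Foliation M p q) (L : Set M) : Prop :=
  ∃ x : M, L = {y | F.leafRel x y}

/-- The *leaf topology* on a leaf (or any subset) `L`: the topology generated by the
plaques contained in `L`. -/
def leafTopology (F : Foliation M p q) (L : Set M) : TopologicalSpace L :=
  TopologicalSpace.generateFrom
    {s : Set L | ∃ P, F.IsPlaque P ∧ P ⊆ L ∧ s = Subtype.val ⁻¹' P}

/-- A leaf is *long* if it is not metrisable in its leaf topology. -/
def IsLongLeaf (F : Foliation M p q) (L : Set M) : Prop :=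
  F.IsLeaf L ∧ ¬ @TopologicalSpace.MetrizableSpace L (F.leafTopology L)

/-- A subset of `M` is *saturated* by the foliation if it is a union of leaves. -/
def Saturated (F : Foliation M p q) (S : Set M) : Prop :=
  ∀ x ∈ S, ∀ y, F.leafRel x y → y ∈ S

end Foliation

/-! ### Auxiliary lemmas for statement 7 -/

section Aux

open Cardinal in
lemma omega1_isLimit : Order.IsSuccLimit ((Cardinal.aleph 1).ord) :=
  Cardinal.isSuccLimit_ord (Cardinal.aleph0_le_aleph 1)

lemma CLR.le_iff' (a b : Omega1 × (Set.Ico (0:ℝ) 1)) :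
    (toLex a : ClosedLongRay) ≤ toLex b ↔ a.1 < b.1 ∨ a.1 = b.1 ∧ a.2 ≤ b.2 :=
  Prod.Lex.le_iff

lemma CLR.lt_iff' (a b : Omega1 × (Set.Ico (0:ℝ) 1)) :
    (toLex a : ClosedLongRay) < toLex b ↔ a.1 < b.1 ∨ a.1 = b.1 ∧ a.2 < b.2 :=
  Prod.Lex.lt_iff

lemma CLR.le_iff (a b : ClosedLongRay) :
    a ≤ b ↔ (ofLex a).1 < (ofLex b).1 ∨ (ofLex a).1 = (ofLex b).1 ∧ (ofLex a).2 ≤ (ofLex b).2 :=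
  CLR.le_iff' (ofLex a) (ofLex b)

instance : Nonempty LongRay := by
  have h0 : (0:Ordinal) < (Cardinal.aleph 1).ord := omega1_isLimit.pos
  refine ⟨⟨toLex (⟨0, h0⟩, ⟨1/2, by norm_num⟩), toLex (⟨0, h0⟩, ⟨0, by norm_num⟩), ?_⟩⟩
  apply (CLR.lt_iff' _ _).2
  exact Or.inr ⟨rfl, show (0:ℝ) < 1/2 by norm_num⟩

/-- Every sequence in the closed long ray has a least upper bound. -/
lemma CLR.exists_isLUB (g : ℕ → ClosedLongRay) : ∃ γ : ClosedLongRay, IsLUB (Set.range g) γ := by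
  set u : ℕ → Ordinal := fun k => ((ofLex (g k)).1).val with hu
  set tt : ℕ → ℝ := fun k => ((ofLex (g k)).2).val with htt
  have hu1 : ∀ k, u k < (Cardinal.aleph 1).ord := fun k => ((ofLex (g k)).1).2
  have ht0 : ∀ k, 0 ≤ tt k := fun k => ((ofLex (g k)).2).2.1
  have ht1 : ∀ k, tt k < 1 := fun k => ((ofLex (g k)).2).2.2
  set O : Ordinal := ⨆ k, u k with hO'
  have hO : O < (Cardinal.aleph 1).ord :=
    Cardinal.iSup_lt_ord_of_isRegular Cardinal.isRegular_aleph_one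
      (by simpa using Cardinal.aleph0_lt_aleph_one) hu1
  have hle : ∀ k, u k ≤ O := fun k => Ordinal.le_iSup u k
  have key : ∀ k (b : ClosedLongRay), g k ≤ b ↔
      (u k < ((ofLex b).1).val ∨ u k = ((ofLex b).1).val ∧ tt k ≤ ((ofLex b).2).val) := by
    intro k b
    rw [CLR.le_iff]
    simp [Subtype.coe_lt_coe, ← Subtype.ext_iff, Subtype.coe_le_coe, u, tt]
    exact or_congr Iff.rfl (and_congr Subtype.ext_iff Iff.rfl)
  by_cases hmax : ∃ k, u k = O
  · set K : Set ℕ := {k | u k = O} with hK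
    have hKne : K.Nonempty := hmax
    have hbdd : BddAbove (tt '' K) := ⟨1, by rintro r ⟨k, _, rfl⟩; exact (ht1 k).le⟩
    set s : ℝ := sSup (tt '' K) with hs'
    obtain ⟨k₀, hk₀⟩ := hKne
    have hs0 : 0 ≤ s := le_trans (ht0 k₀) (le_csSup hbdd ⟨k₀, hk₀, rfl⟩)
    have hs_le : ∀ k ∈ K, tt k ≤ s := fun k hk => le_csSup hbdd ⟨k, hk, rfl⟩
    have hs1 : s ≤ 1 := csSup_le ⟨tt k₀, ⟨k₀, hk₀, rfl⟩⟩ (by rintro r ⟨k, _, rfl⟩; exact (ht1 k).le)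
    -- common fact about upper bounds
    have hub_struct : ∀ b : ClosedLongRay, b ∈ upperBounds (Set.range g) →
        O < ((ofLex b).1).val ∨ (O = ((ofLex b).1).val ∧ ∀ k ∈ K, tt k ≤ ((ofLex b).2).val) := by
      intro b hb
      have h0 := (key k₀ b).1 (hb (Set.mem_range_self k₀))
      rcases h0 with h | h
      · exact Or.inl (hk₀ ▸ h)
      · refine Or.inr ⟨hk₀ ▸ h.1, fun k hk => ?_⟩
        have := (key k b).1 (hb (Set.mem_range_self k))
        rcases this with h' | h'
        · exact absurd h' (by rw [hk, ← h.1, hk₀]; exact lt_irrefl _)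
        · exact h'.2
    by_cases hs_lt : s < 1
    · refine ⟨toLex (⟨O, hO⟩, ⟨s, hs0, hs_lt⟩), ?_, ?_⟩
      · rintro x ⟨k, rfl⟩
        refine (key k _).2 ?_
        rcases lt_or_eq_of_le (hle k) with h | h
        · exact Or.inl h
        · exact Or.inr ⟨h, hs_le k h⟩
      · intro b hb
        rcases hub_struct b hb with h | ⟨h1, h2⟩
        · exact (CLR.le_iff _ _).2 (Or.inl (h))
        · refine (CLR.le_iff _ _).2 (Or.inr ⟨Subtype.ext h1, ?_⟩)
          exact Subtype.coe_le_coe.1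
            (csSup_le ⟨tt k₀, ⟨k₀, hk₀, rfl⟩⟩ (by rintro r ⟨k, hk, rfl⟩; exact h2 k hk))
    · -- s = 1
      have hOsucc : O + 1 < (Cardinal.aleph 1).ord := by
        rw [Ordinal.add_one_eq_succ]
        exact omega1_isLimit.succ_lt hO
      refine ⟨toLex (⟨O + 1, hOsucc⟩, ⟨0, le_refl _, by norm_num⟩), ?_, ?_⟩
      · rintro x ⟨k, rfl⟩
        refine (key k _).2 ?_
        exact Or.inl (lt_of_le_of_lt (hle k) (lt_add_one O))
      · intro b hb
        rcases hub_struct b hb with h | ⟨h1, h2⟩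
        · have : O + 1 ≤ ((ofLex b).1).val := by
            rw [Ordinal.add_one_eq_succ]; exact Order.succ_le_of_lt h
          rcases lt_or_eq_of_le this with h' | h'
          · exact (CLR.le_iff _ _).2 (Or.inl (h'))
          · exact (CLR.le_iff _ _).2 (Or.inr ⟨Subtype.ext h', ((ofLex b).2).2.1⟩)
        · exfalso
          have : s ≤ ((ofLex b).2).val :=
            csSup_le ⟨tt k₀, ⟨k₀, hk₀, rfl⟩⟩ (by rintro r ⟨k, hk, rfl⟩; exact h2 k hk)
          have h2' : ((ofLex b).2).val < 1 := ((ofLex b).2).2.2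
          have : s < 1 := lt_of_le_of_lt this h2'
          exact hs_lt this
  · -- sup not attained
    push_neg at hmax
    have hlt : ∀ k, u k < O := fun k => lt_of_le_of_ne (hle k) (hmax k)
    refine ⟨toLex (⟨O, hO⟩, ⟨0, le_refl _, by norm_num⟩), ?_, ?_⟩
    · rintro x ⟨k, rfl⟩
      refine (key k _).2 ?_
      exact Or.inl (hlt k)
    · intro b hb
      have hOle : O ≤ ((ofLex b).1).val := by
        refine Ordinal.iSup_le fun k => ?_
        rcases (key k b).1 (hb (Set.mem_range_self k)) with h | h
        · exact h.le
        · exact h.1.le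
      rcases lt_or_eq_of_le hOle with h | h
      · exact (CLR.le_iff _ _).2 (Or.inl (h))
      · exact (CLR.le_iff _ _).2 (Or.inr ⟨Subtype.ext h, ((ofLex b).2).2.1⟩)

/-- A monotone sequence in the long ray converges (in the long ray) to some point. -/
lemma LongRay.exists_tendsto (g : ℕ → LongRay) (hg : Monotone g) :
    ∃ γ : LongRay, (∀ k, g k ≤ γ) ∧ Filter.Tendsto g Filter.atTop (nhds γ) := by
  obtain ⟨γ', hγ'⟩ := CLR.exists_isLUB (fun k => (g k).val)
  have hmem : ∃ y, y < γ' := by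
    obtain ⟨y, hy⟩ := (g 0).2
    exact ⟨y, lt_of_lt_of_le hy (hγ'.1 (Set.mem_range_self 0))⟩
  have hmono : Monotone (fun k => (g k).val) := fun a b h => hg h
  have htend : Filter.Tendsto (fun k => (g k).val) Filter.atTop (nhds γ') :=
    tendsto_atTop_isLUB hmono hγ'
  refine ⟨⟨γ', hmem⟩, fun k => hγ'.1 (Set.mem_range_self k), ?_⟩
  have hemb : Topology.IsEmbedding (Subtype.val : LongRay → ClosedLongRay) := Topology.IsEmbedding.subtypeVal
  exact hemb.tendsto_nhds_iff.2 htend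

end Aux

/-- Every metrisable topological manifold is squat: every continuous map
`𝕃₊ → M` is eventually constant. -/
theorem statement7 (n : ℕ) (M : Type) [TopologicalSpace M]
    [TopologicalSpace.MetrizableSpace M] (hM : IsTopManifold M n) :
    Squat M := by
  letI : MetricSpace M := TopologicalSpace.metrizableSpaceMetric M
  intro f hf
  -- Step 1: for each ε > 0, f is eventually within ε of a fixed value
  have key : ∀ ε : ℝ, 0 < ε → ∃ β : LongRay, ∀ α, β ≤ α → dist (f α) (f β) < ε := by
    intro ε hε
    by_contra hcon
    push_neg at hcon
    choose h hle hdist using hcon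
    obtain ⟨x0⟩ := (inferInstance : Nonempty LongRay)
    set g : ℕ → LongRay := fun k => Nat.rec x0 (fun _ ih => h ih) k with hg
    have hgsucc : ∀ k, g (k + 1) = h (g k) := fun k => rfl
    have hgmono : Monotone g := monotone_nat_of_le_succ fun k => hle (g k)
    obtain ⟨γ, -, htend⟩ := LongRay.exists_tendsto g hgmono
    have hF : Filter.Tendsto (fun k => f (g k)) Filter.atTop (nhds (f γ)) :=
      (hf.tendsto γ).comp htend
    have hF1 : Filter.Tendsto (fun k => f (g (k + 1))) Filter.atTop (nhds (f γ)) :=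
      hF.comp (Filter.tendsto_add_atTop_nat 1)
    have hdist0 : Filter.Tendsto (fun k => dist (f (g (k + 1))) (f (g k)))
        Filter.atTop (nhds 0) := by
      have := hF1.dist hF
      simpa using this
    have hev : ∀ᶠ k in Filter.atTop, dist (f (g (k + 1))) (f (g k)) < ε :=
      hdist0.eventually_lt_const hε
    obtain ⟨k, hk⟩ := hev.exists
    have : ε ≤ dist (f (g (k + 1))) (f (g k)) := by
      rw [hgsucc]; exact hdist (g k)
    linarith
  -- Step 2: assemble
  choose β hβ using fun m : ℕ => key (1 / (m + 1)) (by positivity)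
  set b : ℕ → LongRay := fun m => Nat.rec (β 0) (fun m ih => max ih (β (m + 1))) m with hb
  have hbmono : Monotone b := monotone_nat_of_le_succ fun m => le_max_left _ _
  have hβb : ∀ m, β m ≤ b m := by
    intro m
    cases m with
    | zero => exact le_refl _
    | succ m => exact le_max_right _ _
  obtain ⟨γ, hγub, -⟩ := LongRay.exists_tendsto b hbmono
  refine ⟨γ, f γ, fun α hα => ?_⟩
  apply eq_of_forall_dist_le
  intro ε hε
  obtain ⟨m, hm⟩ := exists_nat_gt (2 / ε)
  have hβγ : β m ≤ γ := le_trans (hβb m) (hγub m)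
  have h1 : dist (f α) (f (β m)) < 1 / (m + 1) := hβ m α (le_trans hβγ hα)
  have h2 : dist (f γ) (f (β m)) < 1 / (m + 1) := hβ m γ hβγ
  have hd : dist (f α) (f γ) < 2 / (m + 1) := by
    calc dist (f α) (f γ) ≤ dist (f α) (f (β m)) + dist (f (β m)) (f γ) := dist_triangle _ _ _
    _ = dist (f α) (f (β m)) + dist (f γ) (f (β m)) := by rw [dist_comm (f (β m))]
    _ < 1 / (m + 1) + 1 / (m + 1) := by linarith
    _ = 2 / (m + 1) := by ring
  have hm1 : 2 / ((m : ℝ) + 1) ≤ ε := by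
    rw [div_le_iff₀ (by positivity)]
    rw [div_lt_iff₀ hε] at hm
    nlinarith
  linarith
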